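/- For every u ∈ (0, π), the derivative at u of the function u ↦ −(d₀⁰(u) + d₂⁰(u))/(sin u·(sin u − u·cos u)) equals (−2u + sin(2u))²/(4·sin² u), where d₀⁰(u) = (1/2)·sin u·(2u³·sin u + 3u²·cos u + u·sin³ u − 6u·sin u + 3·cos u·sin² u) and d₂⁰(u) = −u·sin⁴ u − 2·cos u·sin³ u + 3u·sin² u − u³. -/

import Mathlib

open Set Real

lemma sin_sub_mul_cos_pos {u : ℝ} (hu : u ∈ Ioo 0 π) : 0 < sin u - u * cos u := by
  obtain ⟨h0, hπ⟩ := hu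
  have hs : 0 < sin u := Real.sin_pos_of_pos_of_lt_pi h0 hπ
  rcases le_or_gt (cos u) 0 with hc | hc
  · nlinarith
  · have hlt : u < π / 2 := by
      by_contra h
      push_neg at h
      have := Real.cos_nonpos_of_pi_div_two_le_of_le h (by linarith [Real.pi_pos])
      linarith
    have ht := Real.lt_tan h0 hlt
    rw [Real.tan_eq_sin_div_cos] at ht
    have : u * cos u < sin u := by
      rw [← lt_div_iff₀ hc]; exact ht
    linarith

lemma key_hasDerivAt {u : ℝ} (hu : u ∈ Ioo 0 π) :
    HasDerivAt (fun u : ℝ => sin u * cos u / 2 + u / 2 - u ^ 2 * cos u / sin u)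
      ((-2 * u + sin (2 * u)) ^ 2 / (4 * sin u ^ 2)) u := by
  obtain ⟨h0, hπ⟩ := hu
  have hs : 0 < sin u := Real.sin_pos_of_pos_of_lt_pi h0 hπ
  have h1 := (((((Real.hasDerivAt_sin u).mul (Real.hasDerivAt_cos u)).div_const 2).add
      ((hasDerivAt_id u).div_const 2)).sub
      ((((hasDerivAt_pow 2 u).mul (Real.hasDerivAt_cos u)).div
        (Real.hasDerivAt_sin u) hs.ne')))
  refine h1.congr_deriv ?_
  symm
  have hsc : sin u ^ 2 + cos u ^ 2 = 1 := Real.sin_sq_add_cos_sq u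
  rw [Real.sin_two_mul]
  simp only [Pi.mul_apply]
  field_simp
  linear_combination (4 * sin u ^ 2 - 8 * u ^ 2) * hsc

theorem deriv_d00_add_d20_quotient :
    ∀ u ∈ Ioo 0 π,
      deriv (fun u : ℝ =>
          -((1/2) * sin u * (2 * u ^ 3 * sin u + 3 * u ^ 2 * cos u + u * sin u ^ 3
                - 6 * u * sin u + 3 * cos u * sin u ^ 2)
              + (-(u * sin u ^ 4) - 2 * cos u * sin u ^ 3 + 3 * u * sin u ^ 2 - u ^ 3))
            / (sin u * (sin u - u * cos u))) u
        = (-2 * u + sin (2 * u)) ^ 2 / (4 * sin u ^ 2) := by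
  intro u hu
  have heq : (fun u : ℝ =>
          -((1/2) * sin u * (2 * u ^ 3 * sin u + 3 * u ^ 2 * cos u + u * sin u ^ 3
                - 6 * u * sin u + 3 * cos u * sin u ^ 2)
              + (-(u * sin u ^ 4) - 2 * cos u * sin u ^ 3 + 3 * u * sin u ^ 2 - u ^ 3))
            / (sin u * (sin u - u * cos u)))
      =ᶠ[nhds u] (fun u : ℝ => sin u * cos u / 2 + u / 2 - u ^ 2 * cos u / sin u) := by
    filter_upwards [isOpen_Ioo.mem_nhds hu] with v hv
    have hs : 0 < sin v := Real.sin_pos_of_pos_of_lt_pi hv.1 hv.2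
    have hd : 0 < sin v - v * cos v := sin_sub_mul_cos_pos hv
    have hsc : sin v ^ 2 + cos v ^ 2 = 1 := Real.sin_sq_add_cos_sq v
    field_simp
    linear_combination (sin v ^ 2 * v - 2 * v ^ 3) * hsc
  rw [heq.deriv_eq]
  exact (key_hasDerivAt hu).deriv
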